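/- Let A ∈ ℂ^{n×n} have eigenvalue λ₀ with algebraic multiplicity 2k+1 and geometric multiplicity 1, with left and right Jordan chains u₁,…,u_{2k+1} and v₁,…,v_{2k+1}. Then v_{k+1}*u_{k+1} ≠ 0. -/

import Mathlib

open Matrix Polynomial Module

private lemma charpoly_shift {n : ℕ} (A : Matrix (Fin n) (Fin n) ℂ) (c : ℂ) :
    Matrix.charpoly (A - c • 1) = (Matrix.charpoly A).comp (X + C c) := by
  let σ : ℂ[X] →+* ℂ[X] := eval₂RingHom C (X + C c)
  have h1 : (Matrix.charpoly A).comp (X + C c) = σ (Matrix.charpoly A) := rfl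
  have h2 : (charmatrix A).map σ = charmatrix (A - c • 1) := by
    ext i j
    by_cases h : i = j
    · subst h
      simp [charmatrix_apply, σ, Matrix.sub_apply, Matrix.smul_apply, Matrix.one_apply_eq,
        coe_eval₂RingHom, eval₂_sub, eval₂_X, eval₂_C, Matrix.diagonal_apply_eq]
      ring
    · simp [charmatrix_apply, Matrix.diagonal_apply_ne _ h, σ, Matrix.sub_apply,
        Matrix.smul_apply, Matrix.one_apply_ne h, coe_eval₂RingHom, eval₂_neg, eval₂_C]
  rw [h1, Matrix.charpoly, Matrix.charpoly, RingHom.map_det, RingHom.mapMatrix_apply, h2]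

private lemma linind_pow {V : Type*} [AddCommGroup V] [Module ℂ V]
    (f : Module.End ℂ V) (x : V) (s : ℕ)
    (h1 : (f ^ (s + 1)) x = 0) (h2 : (f ^ s) x ≠ 0) :
    LinearIndependent ℂ (fun i : Fin (s + 1) => (f ^ (i : ℕ)) x) := by
  have hzero : ∀ p, s + 1 ≤ p → (f ^ p) x = 0 := by
    intro p hp
    obtain ⟨q, rfl⟩ := Nat.exists_eq_add_of_le hp
    rw [add_comm, pow_add, Module.End.mul_apply, h1, map_zero]
  rw [Fintype.linearIndependent_iff]
  intro g hg
  suffices H : ∀ t : ℕ, ∀ i : Fin (s + 1), (i : ℕ) = t → g i = 0 by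
    intro i; exact H i i rfl
  intro t
  induction t using Nat.strong_induction_on with
  | _ t IH =>
    intro i hi
    have his : (i : ℕ) < s + 1 := i.isLt
    have key : (f ^ (s - t)) (∑ j : Fin (s + 1), g j • (f ^ (j : ℕ)) x)
        = g i • (f ^ s) x := by
      rw [map_sum]
      rw [Finset.sum_eq_single i]
      · rw [_root_.map_smul, ← Module.End.mul_apply, ← pow_add]
        have e : s - t + (i : ℕ) = s := by omega
        rw [e]
      · intro j _ hj
        have hjt : (j : ℕ) ≠ t := fun h => hj (Fin.ext (by omega))
        rcases Nat.lt_or_ge (j : ℕ) t with hlt | hge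
        · rw [IH (j : ℕ) hlt j rfl, zero_smul, map_zero]
        · have hle : s + 1 ≤ s - t + (j : ℕ) := by omega
          rw [_root_.map_smul, ← Module.End.mul_apply, ← pow_add, hzero _ hle, smul_zero]
      · intro hmem; exact absurd (Finset.mem_univ i) hmem
    rw [hg, map_zero] at key
    rcases smul_eq_zero.mp key.symm with h | h
    · exact h
    · exact absurd h h2


theorem middle_vectors_not_orthogonal {n k : ℕ}
    (A : Matrix (Fin n) (Fin n) ℂ) (lam0 : ℂ)
    (u v : ℕ → Fin n → ℂ)
    (halg : (Matrix.charpoly A).rootMultiplicity lam0 = 2 * k + 1)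
    (hgeo : Module.finrank ℂ
      ↥(LinearMap.ker ((A - lam0 • (1 : Matrix (Fin n) (Fin n) ℂ)).mulVecLin)) = 1)
    (hu0 : u 1 ≠ 0) (hv0 : v 1 ≠ 0)
    (hu1 : Matrix.vecMul (star (u 1)) A = lam0 • star (u 1))
    (huS : ∀ i, 1 ≤ i → i + 1 ≤ 2 * k + 1 →
      Matrix.vecMul (star (u (i + 1))) A = lam0 • star (u (i + 1)) + star (u i))
    (hv1 : A.mulVec (v 1) = lam0 • v 1)
    (hvS : ∀ j, 1 ≤ j → j + 1 ≤ 2 * k + 1 →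
      A.mulVec (v (j + 1)) = lam0 • v (j + 1) + v j) :
    dotProduct (star (v (k + 1))) (u (k + 1)) ≠ 0 := by
  set N : Matrix (Fin n) (Fin n) ℂ := A - lam0 • 1 with hNdef
  have hsmul1 : ∀ x : Fin n → ℂ, x ᵥ* (lam0 • (1 : Matrix (Fin n) (Fin n) ℂ)) = lam0 • x := by
    intro x
    rw [smul_one_eq_diagonal, vecMul_diagonal_const, op_smul_eq_smul]
  have hsmul2 : ∀ x : Fin n → ℂ, (lam0 • (1 : Matrix (Fin n) (Fin n) ℂ)) *ᵥ x = lam0 • x := by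
    intro x; rw [smul_one_eq_diagonal, diagonal_const_mulVec]
  have hUN1 : star (u 1) ᵥ* N = 0 := by
    rw [hNdef, vecMul_sub, hu1, hsmul1, sub_self]
  have hUNS : ∀ i, 1 ≤ i → i + 1 ≤ 2 * k + 1 → star (u (i + 1)) ᵥ* N = star (u i) := by
    intro i h1 h2
    rw [hNdef, vecMul_sub, huS i h1 h2, hsmul1, add_sub_cancel_left]
  have hNv1 : N *ᵥ v 1 = 0 := by
    rw [hNdef, sub_mulVec, hv1, hsmul2, sub_self]
  have hNvS : ∀ j, 1 ≤ j → j + 1 ≤ 2 * k + 1 → N *ᵥ v (j + 1) = v j := by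
    intro j h1 h2
    rw [hNdef, sub_mulVec, hvS j h1 h2, hsmul2, add_sub_cancel_left]
  -- transfer lemma
  have ht : ∀ i j, 1 ≤ i → i + 1 ≤ 2 * k + 1 → 1 ≤ j → j + 1 ≤ 2 * k + 1 →
      star (u (i + 1)) ⬝ᵥ v j = star (u i) ⬝ᵥ v (j + 1) := by
    intro i j hi hi' hj hj'
    conv_lhs => rw [← hNvS j hj hj']
    rw [dotProduct_mulVec, hUNS i hi hi']
  -- move to the ends
  have hmid : ∀ t, t ≤ k →
      star (u (k + 1)) ⬝ᵥ v (k + 1) = star (u (k + 1 - t)) ⬝ᵥ v (k + 1 + t) := by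
    intro t
    induction t with
    | zero => intro _; simp
    | succ t IHt =>
      intro ht'
      have e2 : k + 1 - (t + 1) = k - t := by omega
      have e3 : k + 1 + (t + 1) = (k + 1 + t) + 1 := by omega
      rw [IHt (by omega), e2, e3]
      have e1 : k + 1 - t = (k - t) + 1 := by omega
      rw [e1]
      exact ht (k - t) (k + 1 + t) (by omega) (by omega) (by omega) (by omega)
  have hfin : star (u (k + 1)) ⬝ᵥ v (k + 1) = star (u 1) ⬝ᵥ v (2 * k + 1) := by
    have h := hmid k le_rfl
    rw [show k + 1 - k = 1 from by omega, show k + 1 + k = 2 * k + 1 from by omega] at h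
    exact h
  rw [star_dotProduct, ne_eq, star_eq_zero, hfin]
  -- now assume star (u 1) ⬝ᵥ v (2k+1) = 0 and derive a contradiction
  intro hc
  -- the functional w ↦ star (u 1) ⬝ᵥ w
  let F : (Fin n → ℂ) →ₗ[ℂ] ℂ :=
    { toFun := fun w => star (u 1) ⬝ᵥ w
      map_add' := fun x y => dotProduct_add _ _ _
      map_smul' := fun c x => by simp [dotProduct_smul c (star (u 1)) x] }
  have hFu : F (u 1) ≠ 0 := by
    open ComplexOrder in
    simpa [F] using (dotProduct_star_self_eq_zero (v := u 1)).not.mpr hu0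
  have htop : finrank ℂ (Fin n → ℂ) = n := by simp
  have hrn := LinearMap.finrank_range_add_finrank_ker N.mulVecLin
  rw [hgeo, htop] at hrn
  have hkerF : finrank ℂ (LinearMap.ker F) < n := by
    have hne : LinearMap.ker F ≠ ⊤ := by
      intro h
      exact hFu (LinearMap.mem_ker.mp (h.symm ▸ Submodule.mem_top))
    have h2 := Submodule.finrank_lt (K := ℂ) (V := Fin n → ℂ) hne
    rwa [htop] at h2
  have hsub : LinearMap.range N.mulVecLin ≤ LinearMap.ker F := by
    rintro _ ⟨y, rfl⟩
    show star (u 1) ⬝ᵥ (N.mulVecLin y) = 0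
    rw [mulVecLin_apply, dotProduct_mulVec, hUN1, zero_dotProduct]
  have heq : LinearMap.range N.mulVecLin = LinearMap.ker F :=
    Submodule.eq_of_le_of_finrank_le hsub (by omega)
  -- v (2k+1) lies in the range of N
  have hvmem : v (2 * k + 1) ∈ LinearMap.range N.mulVecLin := by
    rw [heq]; exact hc
  obtain ⟨w, hw⟩ := hvmem
  rw [mulVecLin_apply] at hw
  -- powers of N applied to w walk down the chain
  have hpow : ∀ t, t ≤ 2 * k → (N.mulVecLin ^ (t + 1)) w = v (2 * k + 1 - t) := by
    intro t
    induction t with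
    | zero => intro _; simpa [mulVecLin_apply] using hw
    | succ t IH =>
      intro ht'
      have e : 2 * k + 1 - t = (2 * k + 1 - (t + 1)) + 1 := by omega
      rw [pow_succ', Module.End.mul_apply, IH (by omega), mulVecLin_apply, e,
        hNvS (2 * k + 1 - (t + 1)) (by omega) (by omega)]
  have hlast : (N.mulVecLin ^ (2 * k + 1)) w = v 1 := by
    have h := hpow (2 * k) le_rfl
    rwa [show 2 * k + 1 - 2 * k = 1 from by omega] at h
  have hkill : (N.mulVecLin ^ (2 * k + 1 + 1)) w = 0 := by
    rw [pow_succ', Module.End.mul_apply, hlast, mulVecLin_apply, hNv1]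
  have hli := linind_pow N.mulVecLin w (2 * k + 1) hkill (by rw [hlast]; exact hv0)
  have hmem : ∀ i : Fin (2 * k + 1 + 1),
      (N.mulVecLin ^ (i : ℕ)) w ∈ LinearMap.ker (N.mulVecLin ^ (2 * k + 1 + 1)) := by
    intro i
    rw [LinearMap.mem_ker, ← Module.End.mul_apply, ← pow_add, add_comm, pow_add,
      Module.End.mul_apply, hkill, map_zero]
  have hspan : Submodule.span ℂ
      (Set.range (fun i : Fin (2 * k + 1 + 1) => (N.mulVecLin ^ (i : ℕ)) w))
      ≤ LinearMap.ker (N.mulVecLin ^ (2 * k + 1 + 1)) :=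
    Submodule.span_le.mpr (by rintro _ ⟨i, rfl⟩; exact hmem i)
  have hcard : finrank ℂ (Submodule.span ℂ
      (Set.range (fun i : Fin (2 * k + 1 + 1) => (N.mulVecLin ^ (i : ℕ)) w)))
      = 2 * k + 1 + 1 := by
    rw [finrank_span_eq_card hli, Fintype.card_fin]
  have hk1 : 2 * k + 1 + 1 ≤ finrank ℂ (LinearMap.ker (N.mulVecLin ^ (2 * k + 1 + 1))) := by
    have hmono := Submodule.finrank_mono hspan
    rwa [hcard] at hmono
  have hkerle : LinearMap.ker (N.mulVecLin ^ (2 * k + 1 + 1))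
      ≤ Module.End.maxGenEigenspace N.mulVecLin 0 := by
    intro x hx
    rw [Module.End.mem_maxGenEigenspace]
    exact ⟨2 * k + 1 + 1, by simpa using hx⟩
  have hdim : finrank ℂ (Module.End.maxGenEigenspace N.mulVecLin 0) = 2 * k + 1 := by
    rw [LinearMap.finrank_maxGenEigenspace_zero_eq]
    have hφc : LinearMap.charpoly N.mulVecLin = Matrix.charpoly N := by
      rw [← LinearMap.charpoly_toMatrix N.mulVecLin (Pi.basisFun ℂ (Fin n))]
      congr 1
      rw [LinearMap.toMatrix_eq_toMatrix', ← Matrix.toLin'_apply' N, LinearMap.toMatrix'_toLin']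
    rw [hφc, hNdef, charpoly_shift, ← Polynomial.rootMultiplicity_eq_natTrailingDegree, halg]
  have hfinal := le_trans hk1 (Submodule.finrank_mono hkerle)
  rw [hdim] at hfinal
  omega
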